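/- Let Γ be a connected finite simple graph and let v_i, v_j be vertices with d(v_i, v_j) ≥ 3. Let K be a connected component of Γ \ S_i and Q a connected component of Γ \ S_j. If v_i ∈ Q and v_j ∉ K, then K ⊆ Q. -/

import Mathlib

def gstar {V : Type*} (G : SimpleGraph V) (v : V) : Set V := {u | u = v ∨ G.Adj v u}

def IsCompOf {V : Type*} (G : SimpleGraph V) (s K : Set V) : Prop :=
  K.Nonempty ∧ K ⊆ s ∧ (G.induce K).Connected ∧
    ∀ K' : Set V, K ⊆ K' → K' ⊆ s → (G.induce K').Connected → K' = K

/-- dist between members of the two stars is at most 2. -/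
lemma gstar_disj {V : Type*} (G : SimpleGraph V) (hconn : G.Connected)
    {i j u : V} (hd : 3 ≤ G.dist i j) (hu : u ∈ gstar G i) : u ∉ gstar G j := by
  intro hv
  have h1 : G.dist i u ≤ 1 := by
    rcases hu with h | h
    · subst h; simp [SimpleGraph.dist_self]
    · exact le_of_eq ((SimpleGraph.dist_eq_one_iff_adj).2 h)
  have h2 : G.dist u j ≤ 1 := by
    rcases hv with h | h
    · subst h; simp [SimpleGraph.dist_self]
    · exact le_of_eq (by rw [SimpleGraph.dist_comm]; exact (SimpleGraph.dist_eq_one_iff_adj).2 h)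
  have := hconn.dist_triangle (u := i) (v := u) (w := j)
  omega

/-- a vertex of s adjacent to a member of a component of s lies in the component. -/
lemma mem_of_adj_comp {V : Type*} {G : SimpleGraph V} {s K : Set V}
    (hK : IsCompOf G s K) {x y : V} (hx : x ∈ K) (hy : y ∈ s)
    (hadj : G.Adj x y) : y ∈ K := by
  obtain ⟨hne, hsub, hcon, hmax⟩ := hK
  have hco : (G.induce (K ∪ {x, y})).Connected :=
    SimpleGraph.connected_induce_union hcon.preconnected
      (SimpleGraph.induce_pair_connected_of_adj hadj).preconnected hx (by simp) hadj
  have heq : K ∪ {x, y} = K := by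
    refine hmax _ Set.subset_union_left ?_ hco
    rintro z (hz | hz)
    · exact hsub hz
    · rcases hz with rfl | rfl
      · exact hsub hx
      · exact hy
  have : y ∈ K ∪ {x, y} := by simp
  rwa [heq] at this

theorem stmt2 {V : Type*} [Fintype V] (G : SimpleGraph V) (hconn : G.Connected)
    (i j : V) (hd : 3 ≤ G.dist i j)
    (K Q : Set V)
    (hK : IsCompOf G ((gstar G i)ᶜ) K) (hQ : IsCompOf G ((gstar G j)ᶜ) Q)
    (hiQ : i ∈ Q) (hjK : j ∉ K) :
    K ⊆ Q := by
  -- gstar i ⊆ Q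
  have hstarQ : gstar G i ⊆ Q := by
    intro u hu
    rcases hu with rfl | h
    · exact hiQ
    · exact mem_of_adj_comp hQ hiQ (gstar_disj G hconn hd (Or.inr h)) h
  -- K ⊆ (gstar G j)ᶜ
  have hKj : K ⊆ (gstar G j)ᶜ := by
    intro x hx hxj
    rcases hxj with rfl | h
    · exact hjK hx
    · have hjs : j ∈ (gstar G i)ᶜ := by
        intro hji
        exact (gstar_disj G hconn hd hji) (Or.inl rfl)
      exact hjK (mem_of_adj_comp hK hx hjs h.symm)
  -- find an edge from K to Q
  obtain ⟨k, hk⟩ := hK.1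
  have key : ∀ (x y : V) (p : G.Walk x y), x ∈ K → y ∈ gstar G i →
      ∃ a ∈ K, ∃ b ∈ gstar G i, G.Adj a b := by
    intro x y p
    induction p with
    | nil => exact fun hx hy => absurd hy (hK.2.1 hx)
    | @cons u v w hadj p ih =>
      intro hx hy
      by_cases hvK : v ∈ K
      · exact ih hvK hy
      · have hv : v ∈ gstar G i := by
          by_contra hvs
          exact hvK (mem_of_adj_comp hK hx hvs hadj)
        exact ⟨u, hx, v, hv, hadj⟩
  obtain ⟨a, ha, b, hb', hab⟩ := key k i (hconn.1 k i).some hk (Or.inl rfl)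
  have hb : b ∈ Q := hstarQ hb'
  -- K ∪ Q is connected, contained in (gstar G j)ᶜ, so equals Q
  have hco : (G.induce (K ∪ Q)).Connected :=
    SimpleGraph.connected_induce_union hK.2.2.1.preconnected hQ.2.2.1.preconnected ha hb hab
  have heq : K ∪ Q = Q := hQ.2.2.2 _ Set.subset_union_right
    (Set.union_subset hKj hQ.2.1) hco
  intro x hx
  rw [← heq]; exact Or.inl hx
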